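/- arXiv:2401.07949 — 3 statements merged into one kernel-verified Lean document; each statement's English description precedes it below -/
import Mathlib

section
/- Proposition 3.1(i) (perturbed forcing terms inherit coercivity). Let n ≥ 2 and suppose c : ℝ^n → ℝ is ℤ^n-periodic, Lipschitz continuous, and satisfies essinf_{ℝ^n}(c² − (n−1)|Dc|) ≥ δ for some δ > 0. For η ≥ 0 define c^η(x) = sup_{|z|≤η} c(x+z) and c_η(x) = inf_{|z|≤η} c(x+z). Then c^η and c_η are ℤ^n-periodic, Lipschitz continuous (with Lipschitz constant at most that of c), and satisfy essinf_{ℝ^n}((c^η)² − (n−1)|Dc^η|) ≥ δ and essinf_{ℝ^n}((c_η)² − (n−1)|Dc_η|) ≥ δ. -/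
open Filter Topology Set MeasureTheory

noncomputable section

/-- Euclidean space `ℝ^n`. -/
abbrev En (n : ℕ) : Type := EuclideanSpace ℝ (Fin n)

/-- `n × n` real matrices. -/
abbrev Mat (n : ℕ) : Type := Matrix (Fin n) (Fin n) ℝ

/-- Loewner order: `X ≤ Y` iff `Y - X` is positive semidefinite. -/
def MLE {m : Type*} [Fintype m] (X Y : Matrix m m ℝ) : Prop := (Y - X).PosSemidef

/-- The rank-one matrix `p ⊗ p`. -/
def outer {n : ℕ} (p : En n) : Mat n :=
  Matrix.vecMulVec (WithLp.equiv 2 (Fin n → ℝ) p) (WithLp.equiv 2 (Fin n → ℝ) p)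

/-- Matrix acting on a Euclidean vector. -/
def matVec {m : Type*} [Fintype m] (X : Matrix m m ℝ) (v : EuclideanSpace ℝ m) :
    EuclideanSpace ℝ m :=
  (WithLp.equiv 2 (m → ℝ)).symm (X.mulVec (WithLp.equiv 2 (m → ℝ) v))

/-- The norm `‖X‖ = sup_{|v|=1} |⟨Xv, v⟩|`. -/
def symNorm {n : ℕ} (X : Mat n) : ℝ :=
  ⨆ v : {v : En n // ‖v‖ = 1}, |(inner ℝ (matVec X v.1) v.1 : ℝ)|

/-- The vector in `ℝ^n` with the integer coordinates `k`. -/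
def intVec {n : ℕ} (k : Fin n → ℤ) : En n :=
  (WithLp.equiv 2 (Fin n → ℝ)).symm fun i => (k i : ℝ)

/-- `ℤ^n`-periodicity of a function on `ℝ^n`. -/
def ZPeriodic {n : ℕ} (v : En n → ℝ) : Prop :=
  ∀ (y : En n) (k : Fin n → ℤ), v (y + intVec k) = v y

/-- Upper semicontinuous envelope `F*` of an operator `F(X,p,y)`, computed with respect
to approach through points with `p ≠ 0`. -/
def upperEnv {n : ℕ} (F : Mat n → En n → En n → ℝ) (X : Mat n) (p y : En n) : ℝ :=
  limsup (fun w : Mat n × En n × En n => F w.1 w.2.1 w.2.2)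
    (𝓝 (X, p, y) ⊓ 𝓟 {w : Mat n × En n × En n | w.2.1 ≠ 0})

/-- Lower semicontinuous envelope `F_*` of an operator `F(X,p,y)`. -/
def lowerEnv {n : ℕ} (F : Mat n → En n → En n → ℝ) (X : Mat n) (p y : En n) : ℝ :=
  liminf (fun w : Mat n × En n × En n => F w.1 w.2.1 w.2.2)
    (𝓝 (X, p, y) ⊓ 𝓟 {w : Mat n × En n × En n | w.2.1 ≠ 0})

/-- Time derivative `φ_t` of a function `φ(x,t)`. -/
def tDeriv {n : ℕ} (φ : En n × ℝ → ℝ) (z : En n × ℝ) : ℝ := fderiv ℝ φ z (0, 1)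

/-- Spatial gradient `Dφ` of a function `φ(x,t)`. -/
def sGrad {n : ℕ} (φ : En n × ℝ → ℝ) (z : En n × ℝ) : En n :=
  (WithLp.equiv 2 (Fin n → ℝ)).symm fun i => fderiv ℝ φ z (EuclideanSpace.single i 1, 0)

/-- Spatial Hessian `D²φ` of a function `φ(x,t)`. -/
def sHess {n : ℕ} (φ : En n × ℝ → ℝ) (z : En n × ℝ) : Mat n :=
  Matrix.of fun i j =>
    fderiv ℝ (fun w => fderiv ℝ φ w (EuclideanSpace.single j 1, 0)) z
      (EuclideanSpace.single i 1, 0)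

/-- Gradient of a function `ψ(y)` of space only. -/
def grad1 {n : ℕ} (ψ : En n → ℝ) (y : En n) : En n :=
  (WithLp.equiv 2 (Fin n → ℝ)).symm fun i => fderiv ℝ ψ y (EuclideanSpace.single i 1)

/-- Hessian of a function `ψ(y)` of space only. -/
def hess1 {n : ℕ} (ψ : En n → ℝ) (y : En n) : Mat n :=
  Matrix.of fun i j =>
    fderiv ℝ (fun w => fderiv ℝ ψ w (EuclideanSpace.single j 1)) y (EuclideanSpace.single i 1)

/-- Viscosity subsolution of `u_t + G(D²u, Du, x) = 0` on `ℝ^n × (0,∞)`. -/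
def IsViscSubsol {n : ℕ} (G : Mat n → En n → En n → ℝ) (u : En n × ℝ → ℝ) : Prop :=
  ∀ φ : En n × ℝ → ℝ, ContDiff ℝ 2 φ →
    ∀ (x₀ : En n) (t₀ : ℝ), 0 < t₀ →
      IsLocalMax (fun z => u z - φ z) (x₀, t₀) →
      tDeriv φ (x₀, t₀) + lowerEnv G (sHess φ (x₀, t₀)) (sGrad φ (x₀, t₀)) x₀ ≤ 0

/-- Viscosity supersolution of `u_t + G(D²u, Du, x) = 0` on `ℝ^n × (0,∞)`. -/
def IsViscSupersol {n : ℕ} (G : Mat n → En n → En n → ℝ) (u : En n × ℝ → ℝ) : Prop :=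
  ∀ φ : En n × ℝ → ℝ, ContDiff ℝ 2 φ →
    ∀ (x₀ : En n) (t₀ : ℝ), 0 < t₀ →
      IsLocalMin (fun z => u z - φ z) (x₀, t₀) →
      0 ≤ tDeriv φ (x₀, t₀) + upperEnv G (sHess φ (x₀, t₀)) (sGrad φ (x₀, t₀)) x₀

/-- Viscosity solution of the Cauchy problem `u_t + G(D²u, Du, x) = 0`, `u(·,0) = u₀`. -/
def IsCauchySol {n : ℕ} (G : Mat n → En n → En n → ℝ) (u₀ : En n → ℝ)
    (u : En n × ℝ → ℝ) : Prop :=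
  ContinuousOn u (univ ×ˢ Ici (0:ℝ)) ∧ IsViscSubsol G u ∧ IsViscSupersol G u ∧
    ∀ x : En n, u (x, 0) = u₀ x

/-- Viscosity subsolution of the stationary problem `G(D²v, p + Dv, y) = μ` on `ℝ^n`. -/
def IsStatSubsol {n : ℕ} (G : Mat n → En n → En n → ℝ) (p : En n) (μ : ℝ)
    (v : En n → ℝ) : Prop :=
  ∀ φ : En n → ℝ, ContDiff ℝ 2 φ → ∀ y₀ : En n,
    IsLocalMax (fun y => v y - φ y) y₀ →
    lowerEnv G (hess1 φ y₀) (p + grad1 φ y₀) y₀ ≤ μ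

/-- Viscosity supersolution of the stationary problem `G(D²v, p + Dv, y) = μ` on `ℝ^n`. -/
def IsStatSupersol {n : ℕ} (G : Mat n → En n → En n → ℝ) (p : En n) (μ : ℝ)
    (v : En n → ℝ) : Prop :=
  ∀ φ : En n → ℝ, ContDiff ℝ 2 φ → ∀ y₀ : En n,
    IsLocalMin (fun y => v y - φ y) y₀ →
    μ ≤ upperEnv G (hess1 φ y₀) (p + grad1 φ y₀) y₀

/-- Viscosity solution of the cell problem `G(D²v, p + Dv, y) = μ`. -/
def IsStatSol {n : ℕ} (G : Mat n → En n → En n → ℝ) (p : En n) (μ : ℝ)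
    (v : En n → ℝ) : Prop :=
  Continuous v ∧ IsStatSubsol G p μ v ∧ IsStatSupersol G p μ v

/-- The `ε`-scaled operator `(X,p,x) ↦ F(εX, p, x/ε)`. -/
def epsOp {n : ℕ} (F : Mat n → En n → En n → ℝ) (ε : ℝ) : Mat n → En n → En n → ℝ :=
  fun X p x => F (ε • X) p (ε⁻¹ • x)

/-- The effective geometric operator `(X,p,x) ↦ F̄(p/|p|)|p|`. -/
def effOp {n : ℕ} (Fbar : En n → ℝ) : Mat n → En n → En n → ℝ :=
  fun _ p _ => Fbar (‖p‖⁻¹ • p) * ‖p‖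

/-- The matrix `[[I_n, -I_n], [-I_n, I_n]]`. -/
def J2n (n : ℕ) : Matrix (Fin n ⊕ Fin n) (Fin n ⊕ Fin n) ℝ :=
  Matrix.fromBlocks 1 (-1) (-1) 1

/-- Conditions (I)–(V) on a geometric operator `F(X,p,y)`. -/
def GoodOperator (n : ℕ) (F : Mat n → En n → En n → ℝ) : Prop :=
  -- (I) continuity away from `p = 0`
  (ContinuousOn (fun w : Mat n × En n × En n => F w.1 w.2.1 w.2.2)
      {w : Mat n × En n × En n | w.2.1 ≠ 0}) ∧
  -- (II) degenerate ellipticity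
  (∀ (X Y : Mat n) (p y : En n), p ≠ 0 → MLE X Y → F Y p y ≤ F X p y) ∧
  -- (III) geometricity
  (∀ (X : Mat n) (p y : En n) (lam mu : ℝ), p ≠ 0 → 0 < lam →
      F (lam • X + mu • outer p) (lam • p) y = lam * F X p y) ∧
  -- (IV) ℤ^n-periodicity
  (∀ (X : Mat n) (p y : En n) (k : Fin n → ℤ), F X p (y + intVec k) = F X p y) ∧
  -- (V)(i) local boundedness
  (∀ R : ℝ, 0 < R → ∃ M : ℝ, 0 < M ∧ ∀ (X : Mat n) (p y : En n),
      symNorm X ≤ R → 0 < ‖p‖ → ‖p‖ ≤ R → |F X p y| ≤ M) ∧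
  -- (V)(ii) regularity
  (∃ K : ℝ, 0 < K ∧ ∃ ω : ℝ → ℝ, (∀ r : ℝ, 0 ≤ ω r) ∧ Tendsto ω (𝓝[>] 0) (𝓝 0) ∧
      ∀ (α : ℝ) (X Y : Mat n) (x y : En n), 0 ≤ α → (x = y → α = 0) →
        MLE (-((K * α) • (1 : Matrix (Fin n ⊕ Fin n) (Fin n ⊕ Fin n) ℝ)))
          (Matrix.fromBlocks X 0 0 (-Y)) →
        MLE (Matrix.fromBlocks X 0 0 (-Y)) ((K * α) • J2n n) →
        upperEnv F X (α • (x - y)) x - lowerEnv F Y (α • (x - y)) y ≤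
          ω (‖x - y‖ * (1 + α * ‖x - y‖)))

/-- The forced mean curvature operator `F(X,p,y) = -tr{(I - p̂⊗p̂)X} - c(y)|p|`. -/
def fmcOp {n : ℕ} (c : En n → ℝ) : Mat n → En n → En n → ℝ := fun X p y =>
  -Matrix.trace (((1 : Mat n) - (‖p‖ ^ 2)⁻¹ • outer p) * X) - c y * ‖p‖

/-- The coercivity condition `essinf (c² - (n-1)|Dc|) ≥ δ`, expressed via the a.e.
defined gradient of the Lipschitz function `c`. -/
def Coercive {n : ℕ} (c : En n → ℝ) (δ : ℝ) : Prop :=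
  ∀ᵐ x : En n ∂volume,
    DifferentiableAt ℝ c x → δ ≤ (c x) ^ 2 - ((n : ℝ) - 1) * ‖gradient c x‖

/-- `c^η(x) = sup_{|z| ≤ η} c(x+z)`. -/
def cSup {n : ℕ} (c : En n → ℝ) (η : ℝ) (x : En n) : ℝ :=
  sSup ((fun z => c (x + z)) '' {z : En n | ‖z‖ ≤ η})

/-- `c_η(x) = inf_{|z| ≤ η} c(x+z)`. -/
def cInf {n : ℕ} (c : En n → ℝ) (η : ℝ) (x : En n) : ℝ :=
  sInf ((fun z => c (x + z)) '' {z : En n | ‖z‖ ≤ η})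

/-- Two-dimensional cellular flow `V(y) = A(-cos y₂ sin y₁, cos y₁ sin y₂)`. -/
def cellFlow (A : ℝ) (y : En 2) : En 2 :=
  (WithLp.equiv 2 (Fin 2 → ℝ)).symm
    ![-(A * Real.cos (WithLp.equiv 2 (Fin 2 → ℝ) y 1) * Real.sin (WithLp.equiv 2 (Fin 2 → ℝ) y 0)),
      A * Real.cos (WithLp.equiv 2 (Fin 2 → ℝ) y 0) * Real.sin (WithLp.equiv 2 (Fin 2 → ℝ) y 1)]

/-- The curvature G-equation operator
`F(X,p,y) = (|p| - d tr{(I₂ - p̂⊗p̂)X})₊ + V(y)·p`. -/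
def gOp (d A : ℝ) : Mat 2 → En 2 → En 2 → ℝ := fun X p y =>
  max (‖p‖ - d * Matrix.trace (((1 : Mat 2) - (‖p‖ ^ 2)⁻¹ • outer p) * X)) 0
    + (inner ℝ (cellFlow A y) p : ℝ)

/-- Viscosity subsolution of the discounted problem `λ v + G(D²v, p + Dv, y) = 0`. -/
def IsDiscSubsol {n : ℕ} (lam : ℝ) (G : Mat n → En n → En n → ℝ) (p : En n)
    (v : En n → ℝ) : Prop :=
  ∀ φ : En n → ℝ, ContDiff ℝ 2 φ → ∀ y₀ : En n,
    IsLocalMax (fun y => v y - φ y) y₀ →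
    lam * v y₀ + lowerEnv G (hess1 φ y₀) (p + grad1 φ y₀) y₀ ≤ 0

/-- Viscosity supersolution of the discounted problem `λ v + G(D²v, p + Dv, y) = 0`. -/
def IsDiscSupersol {n : ℕ} (lam : ℝ) (G : Mat n → En n → En n → ℝ) (p : En n)
    (v : En n → ℝ) : Prop :=
  ∀ φ : En n → ℝ, ContDiff ℝ 2 φ → ∀ y₀ : En n,
    IsLocalMin (fun y => v y - φ y) y₀ →
    0 ≤ lam * v y₀ + upperEnv G (hess1 φ y₀) (p + grad1 φ y₀) y₀

/-- Viscosity solution of the discounted problem `λ v + G(D²v, p + Dv, y) = 0`. -/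
def IsDiscSol {n : ℕ} (lam : ℝ) (G : Mat n → En n → En n → ℝ) (p : En n)
    (v : En n → ℝ) : Prop :=
  Continuous v ∧ IsDiscSubsol lam G p v ∧ IsDiscSupersol lam G p v

/-- Lower half-relaxed limit `liminf_* u^ε`. -/
def lowerRelax {n : ℕ} (uu : ℝ → En n × ℝ → ℝ) (z : En n × ℝ) : ℝ :=
  ⨆ r : {r : ℝ // 0 < r}, sInf {a : ℝ | ∃ (ε : ℝ) (w : En n × ℝ),
    0 < ε ∧ ε ≤ r.1 ∧ ‖w.1 - z.1‖ + |w.2 - z.2| ≤ r.1 ∧ a = uu ε w}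

/-- Upper half-relaxed limit `limsup* u^ε`. -/
def upperRelax {n : ℕ} (uu : ℝ → En n × ℝ → ℝ) (z : En n × ℝ) : ℝ :=
  ⨅ r : {r : ℝ // 0 < r}, sSup {a : ℝ | ∃ (ε : ℝ) (w : En n × ℝ),
    0 < ε ∧ ε ≤ r.1 ∧ ‖w.1 - z.1‖ + |w.2 - z.2| ≤ r.1 ∧ a = uu ε w}

/-- The embedding `ν ↦ (ν, 0)` of `ℝ^{n-1}` into `ℝ^n`. -/
def padOne {n : ℕ} (ν : En (n - 1)) : En n :=
  (WithLp.equiv 2 (Fin n → ℝ)).symm fun i =>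
    if h : (i : ℕ) < n - 1 then WithLp.equiv 2 (Fin (n - 1) → ℝ) ν ⟨i, h⟩ else 0


end


noncomputable section AuxProofs

open Filter Topology Set MeasureTheory

namespace Prop31Aux

variable {n : ℕ}

lemma ae_translate (w : En n) {Q : En n → Prop}
    (hQ : ∀ᵐ y : En n ∂volume, Q y) : ∀ᵐ x : En n ∂volume, Q (x + w) := by
  have h := (measurePreserving_add_right (volume : Measure (En n)) w).quasiMeasurePreserving
  rw [ae_iff] at hQ ⊢
  exact h.preimage_null hQ

lemma inner_gradient (f : En n → ℝ) (x v : En n) :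
    (inner ℝ (gradient f x) v : ℝ) = fderiv ℝ f x v := by
  rw [gradient]
  exact InnerProductSpace.toDual_symm_apply

lemma lineDeriv_eq_inner_gradient {c : En n → ℝ} {x : En n} (h : DifferentiableAt ℝ c x)
    (v : En n) : lineDeriv ℝ c x v = (inner ℝ (gradient c x) v : ℝ) := by
  rw [h.lineDeriv_eq_fderiv, inner_gradient]

lemma lineDeriv_shift (c : En n → ℝ) (x w v : En n) :
    lineDeriv ℝ (fun y => c (y + w)) x v = lineDeriv ℝ c (x + w) v := by
  simp only [lineDeriv]
  congr 1
  ext t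
  rw [add_right_comm]

lemma sq_lower {c : En n → ℝ} {L : NNReal} (hc : LipschitzWith L c) (hn : 2 ≤ n)
    {δ : ℝ} (hcoer : Coercive c δ) : ∀ y, δ ≤ (c y) ^ 2 := by
  have hn1 : (1 : ℝ) ≤ (n : ℝ) - 1 := by
    have : (2 : ℝ) ≤ (n : ℝ) := by exact_mod_cast hn
    linarith
  have hae : ∀ᵐ x : En n ∂volume, δ ≤ (c x) ^ 2 := by
    filter_upwards [hcoer, hc.ae_differentiableAt] with x h1 h2
    have := h1 h2
    nlinarith [norm_nonneg (gradient c x)]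
  intro y
  by_contra hy
  push_neg at hy
  have hU : IsOpen {x : En n | (c x) ^ 2 < δ} :=
    isOpen_lt (hc.continuous.pow 2) continuous_const
  have h0 : volume {x : En n | (c x) ^ 2 < δ} = 0 := by
    rw [ae_iff] at hae
    convert hae using 2
    simp [not_le]
  have := hU.measure_pos (volume : Measure (En n)) ⟨y, hy⟩
  simp [h0] at this

lemma lipB {c : En n → ℝ} {L : NNReal} (hc : LipschitzWith L c)
    (y₀ : En n) {r M : ℝ} (hM : 0 ≤ M)
    (hae : ∀ᵐ x : En n ∂volume, x ∈ Metric.ball y₀ r → DifferentiableAt ℝ c x →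
      ‖gradient c x‖ ≤ M)
    {v : En n} (hv : ‖v‖ = 1) {t ρ : ℝ} (ht : 0 ≤ t) (hρ : 0 < ρ) (htρ : t + ρ < r) :
    |c (y₀ + t • v) - c y₀| ≤ M * t + 2 * L * ρ := by
  classical
  set φ : ContDiffBump y₀ := ⟨ρ/2, ρ, by positivity, by linarith⟩ with hφ
  set ψ : En n → ℝ := φ.normed volume with hψ
  have ψcont : Continuous ψ := φ.continuous_normed
  have ψint : Integrable ψ volume := φ.integrable_normed
  have ψnn : ∀ x, 0 ≤ ψ x := φ.nonneg_normed
  have ψint1 : ∫ x, ψ x = 1 := φ.integral_normed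
  have ψsupp : Function.support ψ = Metric.ball y₀ ρ := φ.support_normed_eq
  set h : ℝ → ℝ := fun s => ∫ x, c (x + s • v) * ψ x with hh
  have hint : ∀ s : ℝ, Integrable (fun x => c (x + s • v) * ψ x) volume := by
    intro s
    apply Continuous.integrable_of_hasCompactSupport
    · exact (hc.continuous.comp (continuous_id.add continuous_const)).mul ψcont
    · exact HasCompactSupport.mul_left φ.hasCompactSupport_normed
  have happrox : ∀ s : ℝ, |h s - c (y₀ + s • v)| ≤ L * ρ := by
    intro s
    have e1 : h s - c (y₀ + s • v) = ∫ x, (c (x + s • v) - c (y₀ + s • v)) * ψ x := by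
      simp only [sub_mul]
      rw [integral_sub (hint s) (ψint.const_mul _), integral_const_mul, ψint1, mul_one]
    have e2 : ∀ᵐ x : En n ∂volume,
        ‖(c (x + s • v) - c (y₀ + s • v)) * ψ x‖ ≤ (L * ρ) * ψ x := by
      filter_upwards with x
      by_cases hx0 : ψ x = 0
      · simp [hx0]
      · have hxball : x ∈ Metric.ball y₀ ρ := ψsupp ▸ Function.mem_support.2 hx0
        rw [Metric.mem_ball, dist_eq_norm] at hxball
        have hd : |c (x + s • v) - c (y₀ + s • v)| ≤ L * ρ := by
          have := hc.dist_le_mul (x + s • v) (y₀ + s • v)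
          rw [Real.dist_eq, dist_add_right, dist_eq_norm] at this
          have hL : (L : ℝ) * ‖x - y₀‖ ≤ L * ρ :=
            mul_le_mul_of_nonneg_left hxball.le L.coe_nonneg
          linarith
        rw [Real.norm_eq_abs, abs_mul, abs_of_nonneg (ψnn x)]
        exact mul_le_mul_of_nonneg_right hd (ψnn x)
    calc |h s - c (y₀ + s • v)| = ‖∫ x, (c (x + s • v) - c (y₀ + s • v)) * ψ x‖ := by
          rw [e1, Real.norm_eq_abs]
      _ ≤ ∫ x, (L * ρ) * ψ x := norm_integral_le_of_norm_le (ψint.const_mul _) e2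
      _ = L * ρ := by rw [integral_const_mul, ψint1, mul_one]
  have hLip : LipschitzWith L h := by
    apply LipschitzWith.of_dist_le_mul
    intro s s'
    have e1 : h s - h s' = ∫ x, (c (x + s • v) - c (x + s' • v)) * ψ x := by
      simp only [sub_mul]
      rw [integral_sub (hint s) (hint s')]
    have e2 : ∀ᵐ x : En n ∂volume,
        ‖(c (x + s • v) - c (x + s' • v)) * ψ x‖ ≤ ((L : ℝ) * dist s s') * ψ x := by
      filter_upwards with x
      have hd : |c (x + s • v) - c (x + s' • v)| ≤ (L : ℝ) * dist s s' := by
        have := hc.dist_le_mul (x + s • v) (x + s' • v)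
        rw [Real.dist_eq] at this
        have e3 : dist (x + s • v) (x + s' • v) ≤ dist s s' := by
          rw [dist_eq_norm]
          have e4 : x + s • v - (x + s' • v) = (s - s') • v := by
            rw [sub_smul]; abel
          rw [e4, norm_smul, hv, mul_one, Real.dist_eq, Real.norm_eq_abs]
        calc |c (x + s • v) - c (x + s' • v)| ≤ (L : ℝ) * dist (x + s • v) (x + s' • v) := this
          _ ≤ (L : ℝ) * dist s s' := mul_le_mul_of_nonneg_left e3 L.coe_nonneg
      rw [Real.norm_eq_abs, abs_mul, abs_of_nonneg (ψnn x)]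
      exact mul_le_mul_of_nonneg_right hd (ψnn x)
    calc dist (h s) (h s') = ‖∫ x, (c (x + s • v) - c (x + s' • v)) * ψ x‖ := by
          rw [Real.dist_eq, e1, Real.norm_eq_abs]
      _ ≤ ∫ x, ((L : ℝ) * dist s s') * ψ x :=
          norm_integral_le_of_norm_le (ψint.const_mul _) e2
      _ = (L : ℝ) * dist s s' := by rw [integral_const_mul, ψint1, mul_one]
  set d : ℝ → ℝ := fun s => ∫ x, lineDeriv ℝ c (x + s • v) v * ψ x with hd
  have hder : ∀ s : ℝ, HasDerivWithinAt h (d s) (Ici s) s := by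
    intro s
    have cs_lip : LipschitzWith L (fun x : En n => c (x + s • v)) := by
      apply LipschitzWith.of_dist_le_mul
      intro a b
      have := hc.dist_le_mul (a + s • v) (b + s • v)
      rwa [dist_add_right] at this
    have T0 := cs_lip.integral_inv_smul_sub_mul_tendsto_integral_lineDeriv_mul ψint v
    have dEq : ∫ x, lineDeriv ℝ (fun x : En n => c (x + s • v)) x v * ψ x = d s := by
      have e5 : (fun x => lineDeriv ℝ (fun x : En n => c (x + s • v)) x v * ψ x)
          = fun x => lineDeriv ℝ c (x + s • v) v * ψ x := by
        funext x; rw [lineDeriv_shift]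
      rw [e5]
    rw [dEq] at T0
    have Feq : ∀ τ : ℝ, ∫ x, (τ⁻¹ • (c (x + τ • v + s • v) - c (x + s • v))) * ψ x
        = τ⁻¹ * (h (s + τ) - h s) := by
      intro τ
      have e2 : ∀ x : En n, x + τ • v + s • v = x + (s + τ) • v := by
        intro x; rw [add_assoc, add_comm (τ • v), ← add_smul]
      calc ∫ x, (τ⁻¹ • (c (x + τ • v + s • v) - c (x + s • v))) * ψ x
          = ∫ x, τ⁻¹ * (c (x + (s + τ) • v) * ψ x - c (x + s • v) * ψ x) := by
            congr 1; funext x; rw [e2 x]; simp only [smul_eq_mul]; ring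
        _ = τ⁻¹ * (h (s + τ) - h s) := by
            rw [integral_const_mul, integral_sub (hint _) (hint _)]
    have T : Tendsto (fun τ : ℝ => τ⁻¹ * (h (s + τ) - h s)) (𝓝[>] 0) (𝓝 (d s)) :=
      T0.congr Feq
    have hsub : Tendsto (fun u : ℝ => u - s) (𝓝[>] s) (𝓝[>] (0 : ℝ)) := by
      apply tendsto_nhdsWithin_of_tendsto_nhds_of_eventually_within
      · have := ((continuous_sub_right s).tendsto s).mono_left
          (nhdsWithin_le_nhds (s := Ioi s))
        simpa using this
      · filter_upwards [self_mem_nhdsWithin] with u hu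
        exact sub_pos.2 (Set.mem_Ioi.mp hu)
    have Tslope : Tendsto (slope h s) (𝓝[>] s) (𝓝 (d s)) := by
      have e3 : slope h s = (fun τ : ℝ => τ⁻¹ * (h (s + τ) - h s)) ∘ (fun u => u - s) := by
        funext u
        simp only [slope, Function.comp_apply, div_eq_inv_mul, vsub_eq_sub, smul_eq_mul,
          show s + (u - s) = u from by ring]
      rw [e3]
      exact T.comp hsub
    rw [hasDerivWithinAt_iff_tendsto_slope, Ici_sdiff_left]
    exact Tslope
  have hdb : ∀ s ∈ Ico (0 : ℝ) t, ‖d s‖ ≤ M := by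
    intro s hs
    have base : ∀ᵐ x : En n ∂volume,
        (x ∈ Metric.ball y₀ r → DifferentiableAt ℝ c x → ‖gradient c x‖ ≤ M) ∧
          DifferentiableAt ℝ c x := hae.and hc.ae_differentiableAt
    have tr := ae_translate (s • v) base
    have bound : ∀ᵐ x : En n ∂volume, ‖lineDeriv ℝ c (x + s • v) v * ψ x‖ ≤ M * ψ x := by
      filter_upwards [tr] with x hx
      rcases hx with ⟨h1, h2⟩
      by_cases hx0 : ψ x = 0
      · simp [hx0]
      · have hxball : x ∈ Metric.ball y₀ ρ := ψsupp ▸ Function.mem_support.2 hx0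
        rw [Metric.mem_ball, dist_eq_norm] at hxball
        have hmem : x + s • v ∈ Metric.ball y₀ r := by
          rw [Metric.mem_ball, dist_eq_norm]
          have h3 : ‖x + s • v - y₀‖ ≤ ‖x - y₀‖ + ‖s • v‖ := by
            have e : x + s • v - y₀ = (x - y₀) + s • v := by abel
            rw [e]; exact norm_add_le _ _
          have h4 : ‖s • v‖ = s := by
            rw [norm_smul, hv, mul_one, Real.norm_eq_abs, abs_of_nonneg hs.1]
          have := hs.2
          linarith
        have h5 := h1 hmem h2
        have h6 := lineDeriv_eq_inner_gradient h2 v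
        rw [Real.norm_eq_abs, abs_mul, abs_of_nonneg (ψnn x), h6]
        have h7 : |(inner ℝ (gradient c (x + s • v)) v : ℝ)| ≤ M := by
          calc |(inner ℝ (gradient c (x + s • v)) v : ℝ)|
              ≤ ‖gradient c (x + s • v)‖ * ‖v‖ := abs_real_inner_le_norm _ _
            _ = ‖gradient c (x + s • v)‖ := by rw [hv, mul_one]
            _ ≤ M := h5
        exact mul_le_mul_of_nonneg_right h7 (ψnn x)
    calc ‖d s‖ ≤ ∫ x, M * ψ x := norm_integral_le_of_norm_le (ψint.const_mul M) bound
      _ = M := by rw [integral_const_mul, ψint1, mul_one]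
  have main := norm_image_sub_le_of_norm_deriv_right_le_segment
    (f := h) (a := 0) (b := t) (f' := d) hLip.continuous.continuousOn
    (fun s _ => hder s) hdb t ⟨ht, le_refl t⟩
  rw [Real.norm_eq_abs, sub_zero] at main
  have a0 : |h 0 - c y₀| ≤ L * ρ := by
    have := happrox 0
    rwa [zero_smul, add_zero] at this
  have at' := happrox t
  have h1 := abs_le.1 main
  have h2 := abs_le.1 a0
  have h3 := abs_le.1 at'
  rw [abs_le]
  constructor <;> nlinarith [h1.1, h1.2, h2.1, h2.2, h3.1, h3.2]

lemma lowerB {c : En n → ℝ} {L : NNReal} (hc : LipschitzWith L c) (hn : 2 ≤ n)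
    {δ : ℝ} (hδ : 0 < δ) (hcoer : Coercive c δ) (y₀ : En n) {ε : ℝ} (hε : 0 < ε) :
    ∃ r > 0, ∀ v : En n, ‖v‖ = 1 → ∀ t : ℝ, 0 ≤ t → t ≤ r →
      |c (y₀ + t • v) - c y₀| ≤ (((c y₀) ^ 2 - δ) / ((n : ℝ) - 1) + ε) * t := by
  have hn1 : (1 : ℝ) ≤ (n : ℝ) - 1 := by
    have : (2 : ℝ) ≤ (n : ℝ) := by exact_mod_cast hn
    linarith
  have hnpos : (0 : ℝ) < (n : ℝ) - 1 := by linarith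
  set M₀ : ℝ := ((c y₀) ^ 2 - δ) / ((n : ℝ) - 1) with hM₀
  have hM₀nn : 0 ≤ M₀ := by
    apply div_nonneg _ (by linarith)
    have := sq_lower hc hn hcoer y₀
    linarith
  set M : ℝ := M₀ + ε with hM
  have hMnn : 0 ≤ M := by linarith
  have hcont : Tendsto (fun y => (c y) ^ 2) (𝓝 y₀) (𝓝 ((c y₀) ^ 2)) :=
    ((hc.continuous.pow 2).tendsto y₀)
  have hev : ∀ᶠ y in 𝓝 y₀, (c y) ^ 2 < (c y₀) ^ 2 + ((n : ℝ) - 1) * ε := by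
    apply hcont.eventually_lt_const
    nlinarith
  obtain ⟨r0, hr0, hball⟩ := Metric.eventually_nhds_iff_ball.1 hev
  have hae : ∀ᵐ x : En n ∂volume, x ∈ Metric.ball y₀ r0 → DifferentiableAt ℝ c x →
      ‖gradient c x‖ ≤ M := by
    filter_upwards [hcoer] with x hx hmem hdiff
    have h1 := hx hdiff
    have h2 := hball x hmem
    have h3 : ((n : ℝ) - 1) * ‖gradient c x‖ ≤ (c y₀) ^ 2 - δ + ((n : ℝ) - 1) * ε := by
      nlinarith
    have h4 : ‖gradient c x‖ ≤ ((c y₀) ^ 2 - δ + ((n : ℝ) - 1) * ε) / ((n : ℝ) - 1) :=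
      (le_div_iff₀' hnpos).2 h3
    rw [hM, hM₀]
    calc ‖gradient c x‖ ≤ ((c y₀) ^ 2 - δ + ((n : ℝ) - 1) * ε) / ((n : ℝ) - 1) := h4
      _ = ((c y₀) ^ 2 - δ) / ((n : ℝ) - 1) + ε := by
          field_simp
  refine ⟨r0 / 2, by positivity, fun v hv t ht htr => ?_⟩
  have key : ∀ σ : ℝ, 0 < σ →
      |c (y₀ + t • v) - c y₀| ≤ M * t + σ := by
    intro σ hσ
    set ρ : ℝ := min (σ / (2 * (L : ℝ) + 1)) (r0 / 4) with hρdef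
    have hρpos : 0 < ρ := lt_min (by positivity) (by positivity)
    have htρ : t + ρ < r0 := by
      have h1 : ρ ≤ r0 / 4 := min_le_right _ _
      linarith
    have := lipB hc y₀ hMnn hae hv ht hρpos htρ
    have h2 : 2 * (L : ℝ) * ρ ≤ σ := by
      have h3 : ρ ≤ σ / (2 * (L : ℝ) + 1) := min_le_left _ _
      have h4 : (0 : ℝ) < 2 * (L : ℝ) + 1 := by positivity
      rw [le_div_iff₀ h4] at h3
      nlinarith [L.coe_nonneg]
    linarith
  exact le_of_forall_pos_le_add key

lemma key_bound (hn : 2 ≤ n) {c : En n → ℝ} {L : NNReal} (hc : LipschitzWith L c)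
    {δ : ℝ} (hδ : 0 < δ) (hcoer : Coercive c δ) (f : En n → ℝ) (x₀ y₀ : En n)
    (heq : c y₀ = f x₀) (htouch : ∀ h : En n, c (y₀ + h) ≤ f (x₀ + h))
    (hdiff : DifferentiableAt ℝ f x₀) :
    δ ≤ (f x₀) ^ 2 - ((n : ℝ) - 1) * ‖gradient f x₀‖ := by
  have hn1 : (1 : ℝ) ≤ (n : ℝ) - 1 := by
    have : (2 : ℝ) ≤ (n : ℝ) := by exact_mod_cast hn
    linarith
  have hnpos : (0 : ℝ) < (n : ℝ) - 1 := by linarith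
  set M₀ : ℝ := ((c y₀) ^ 2 - δ) / ((n : ℝ) - 1) with hM₀
  have hM₀nn : 0 ≤ M₀ := by
    apply div_nonneg _ (by linarith)
    have := sq_lower hc hn hcoer y₀
    linarith
  set p : En n := gradient f x₀ with hp
  suffices hle : ‖p‖ ≤ M₀ by
    have h1 : ((n : ℝ) - 1) * ‖p‖ ≤ ((n : ℝ) - 1) * M₀ :=
      mul_le_mul_of_nonneg_left hle (by linarith)
    have hM0 : ((n : ℝ) - 1) * M₀ = (c y₀) ^ 2 - δ := by
      rw [hM₀, mul_div_cancel₀]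
      exact hnpos.ne'
    rw [← heq]
    linarith
  by_contra hlt
  push_neg at hlt
  have hpne : p ≠ 0 := by
    intro h0
    rw [h0, norm_zero] at hlt
    exact absurd hlt (not_lt.2 hM₀nn)
  set ε : ℝ := (‖p‖ - M₀) / 2 with hε
  have hεpos : 0 < ε := by
    rw [hε]
    linarith
  obtain ⟨r, hr, hB⟩ := lowerB hc hn hδ hcoer y₀ hεpos
  set w : En n := -(‖p‖⁻¹ • p) with hw
  have hpnorm : ‖p‖ ≠ 0 := norm_ne_zero_iff.2 hpne
  have hwnorm : ‖w‖ = 1 := by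
    rw [hw, norm_neg, norm_smul, norm_inv, norm_norm, inv_mul_cancel₀ hpnorm]
  have hline : HasDerivAt (fun t : ℝ => x₀ + t • w) w 0 := by
    have h1 : HasDerivAt (fun t : ℝ => t • w) ((1 : ℝ) • w) 0 := (hasDerivAt_id 0).smul_const w
    simpa using h1.const_add x₀
  have hcomp : HasDerivAt (fun t : ℝ => f (x₀ + t • w)) (fderiv ℝ f x₀ w) 0 := by
    have h2 : HasFDerivAt f (fderiv ℝ f x₀) (x₀ + (0 : ℝ) • w) := by
      simpa using hdiff.hasFDerivAt
    exact h2.comp_hasDerivAt 0 hline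
  have hfw : fderiv ℝ f x₀ w = -‖p‖ := by
    rw [← inner_gradient f x₀ w, ← hp, hw]
    rw [inner_neg_right, real_inner_smul_right, real_inner_self_eq_norm_sq]
    field_simp
  set g : ℝ → ℝ := fun t => f (x₀ + t • w) - f x₀ + (M₀ + ε) * t with hgdef
  have hg : HasDerivAt g (-‖p‖ + (M₀ + ε)) 0 := by
    have h3 : HasDerivAt (fun t : ℝ => (M₀ + ε) * t) (M₀ + ε) 0 := by
      simpa using (hasDerivAt_id (0 : ℝ)).const_mul (M₀ + ε)
    have h4 := (hcomp.sub_const (f x₀)).add h3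
    rwa [hfw] at h4
  have hg0 : g 0 = 0 := by simp [hgdef]
  have hgnn : ∀ t ∈ Ioo (0 : ℝ) r, 0 ≤ g t := by
    intro t ht
    have h1 := htouch (t • w)
    have h2 := hB w hwnorm t ht.1.le ht.2.le
    have h3 := (abs_le.1 h2).1
    have h5 : 0 ≤ f (x₀ + t • w) - f x₀ + (M₀ + ε) * t := by
      rw [← heq]
      rw [hM₀] at *
      linarith
    exact h5
  have hslope : Tendsto (slope g 0) (𝓝[>] 0) (𝓝 (-‖p‖ + (M₀ + ε))) := by
    have := hasDerivAt_iff_tendsto_slope.1 hg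
    exact this.mono_left (nhdsWithin_mono _ (fun x hx => ne_of_gt hx))
  have hev : ∀ᶠ t in 𝓝[>] (0 : ℝ), 0 ≤ slope g 0 t := by
    filter_upwards [Ioo_mem_nhdsGT hr] with t ht
    have h6 := hgnn t ht
    have h7 : slope g 0 t = t⁻¹ * g t := by
      simp [slope, hg0]
    rw [h7]
    exact mul_nonneg (inv_nonneg.2 ht.1.le) h6
  have hfin : (0 : ℝ) ≤ -‖p‖ + (M₀ + ε) := ge_of_tendsto hslope hev
  rw [hε] at hfin
  linarith

section CSup

variable {c : En n → ℝ} {L : NNReal} (hc : LipschitzWith L c) {η : ℝ} (hη : 0 ≤ η)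

include hη in
lemma cSup_img_nonempty (x : En n) :
    ((fun z => c (x + z)) '' {z : En n | ‖z‖ ≤ η}).Nonempty :=
  ⟨c (x + 0), ⟨0, by simpa using hη, rfl⟩⟩

include hc in
lemma cSup_img_bdd (x : En n) :
    BddAbove ((fun z => c (x + z)) '' {z : En n | ‖z‖ ≤ η}) := by
  refine ⟨c x + L * η, ?_⟩
  rintro a ⟨z, hz, rfl⟩
  have h1 := hc.dist_le_mul (x + z) x
  rw [Real.dist_eq] at h1
  have h2 : dist (x + z) x = ‖z‖ := by
    rw [dist_eq_norm]
    simp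
  rw [h2] at h1
  have h3 : (L : ℝ) * ‖z‖ ≤ L * η := mul_le_mul_of_nonneg_left hz L.coe_nonneg
  have h4 := (abs_le.1 h1).2
  linarith

include hc in
lemma cInf_img_bdd (x : En n) :
    BddBelow ((fun z => c (x + z)) '' {z : En n | ‖z‖ ≤ η}) := by
  refine ⟨c x - L * η, ?_⟩
  rintro a ⟨z, hz, rfl⟩
  have h1 := hc.dist_le_mul (x + z) x
  rw [Real.dist_eq] at h1
  have h2 : dist (x + z) x = ‖z‖ := by
    rw [dist_eq_norm]
    simp
  rw [h2] at h1
  have h3 : (L : ℝ) * ‖z‖ ≤ L * η := mul_le_mul_of_nonneg_left hz L.coe_nonneg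
  have h4 := (abs_le.1 h1).1
  linarith

include hc hη in
lemma cSup_lipschitz : LipschitzWith L (cSup c η) := by
  apply LipschitzWith.of_dist_le_mul
  intro x y
  have key : ∀ x y : En n, cSup c η x ≤ cSup c η y + L * dist x y := by
    intro x y
    apply csSup_le (cSup_img_nonempty hη x)
    rintro a ⟨z, hz, rfl⟩
    have h1 : c (y + z) ≤ cSup c η y := le_csSup (cSup_img_bdd hc y) ⟨z, hz, rfl⟩
    have h2 := hc.dist_le_mul (x + z) (y + z)
    rw [Real.dist_eq, dist_add_right] at h2
    have h3 := (abs_le.1 h2).2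
    linarith
  rw [Real.dist_eq, abs_le]
  constructor
  · have := key y x
    rw [dist_comm y x] at this
    linarith
  · have := key x y
    linarith

include hc hη in
lemma cInf_lipschitz : LipschitzWith L (cInf c η) := by
  apply LipschitzWith.of_dist_le_mul
  intro x y
  have key : ∀ x y : En n, cInf c η x ≤ cInf c η y + L * dist x y := by
    intro x y
    simp only [cInf]
    rw [← sub_le_iff_le_add]
    apply le_csInf (cSup_img_nonempty hη y)
    rintro a ⟨z, hz, rfl⟩
    have h1 : sInf ((fun z => c (x + z)) '' {z : En n | ‖z‖ ≤ η}) ≤ c (x + z) :=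
      csInf_le (cInf_img_bdd hc x) ⟨z, hz, rfl⟩
    have h2 := hc.dist_le_mul (x + z) (y + z)
    rw [Real.dist_eq, dist_add_right] at h2
    have h3 := (abs_le.1 h2).2
    linarith
  rw [Real.dist_eq, abs_le]
  constructor
  · have := key y x
    rw [dist_comm y x] at this
    linarith
  · have := key x y
    linarith

lemma cSup_periodic (hper : ZPeriodic c) : ZPeriodic (cSup c η) := by
  intro y k
  unfold cSup
  congr 1
  apply Set.image_congr
  intro z _
  rw [add_right_comm, hper (y + z) k]

lemma cInf_periodic (hper : ZPeriodic c) : ZPeriodic (cInf c η) := by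
  intro y k
  unfold cInf
  congr 1
  apply Set.image_congr
  intro z _
  rw [add_right_comm, hper (y + z) k]

include hc hη in
lemma cSup_exists_max (x : En n) :
    ∃ z : En n, ‖z‖ ≤ η ∧ cSup c η x = c (x + z) ∧
      ∀ h : En n, c ((x + z) + h) ≤ cSup c η (x + h) := by
  have hcompact : IsCompact (Metric.closedBall (0 : En n) η) := isCompact_closedBall _ _
  have hne : (Metric.closedBall (0 : En n) η).Nonempty := ⟨0, by simpa using hη⟩
  have hcont : ContinuousOn (fun z => c (x + z)) (Metric.closedBall (0 : En n) η) :=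
    (hc.continuous.comp (continuous_const.add continuous_id)).continuousOn
  obtain ⟨z, hz, hmax'⟩ := hcompact.exists_isMaxOn hne hcont
  have hmax : ∀ w ∈ Metric.closedBall (0 : En n) η, c (x + w) ≤ c (x + z) :=
    fun w hw => hmax' hw
  have hset : {z : En n | ‖z‖ ≤ η} = Metric.closedBall (0 : En n) η := by
    ext w
    simp [Metric.mem_closedBall, dist_eq_norm]
  have hznorm : ‖z‖ ≤ η := by
    simpa using mem_closedBall_zero_iff.1 hz
  refine ⟨z, hznorm, ?_, ?_⟩
  · apply le_antisymm
    · apply csSup_le (cSup_img_nonempty hη x)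
      rintro a ⟨w, hw, rfl⟩
      have hw' : w ∈ Metric.closedBall (0 : En n) η := by rwa [← hset]
      exact hmax w hw'
    · exact le_csSup (cSup_img_bdd hc x) ⟨z, hznorm, rfl⟩
  · intro h
    have e : (x + z) + h = (x + h) + z := by abel
    rw [e]
    exact le_csSup (cSup_img_bdd hc (x + h)) ⟨z, hznorm, rfl⟩

end CSup

lemma coercive_cSup (hn : 2 ≤ n) {c : En n → ℝ} {L : NNReal} (hc : LipschitzWith L c)
    {δ : ℝ} (hδ : 0 < δ) (hcoer : Coercive c δ) {η : ℝ} (hη : 0 ≤ η) :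
    Coercive (cSup c η) δ := by
  apply Filter.Eventually.of_forall
  intro x₀ hdiff
  obtain ⟨z, hz, heq, htouch⟩ := cSup_exists_max hc hη x₀
  exact key_bound hn hc hδ hcoer (cSup c η) x₀ (x₀ + z) heq.symm htouch hdiff

lemma coercive_neg {c : En n → ℝ} {δ : ℝ} (h : Coercive c δ) :
    Coercive (fun y => -c y) δ := by
  filter_upwards [h] with x hx hdiff
  have hd : DifferentiableAt ℝ c x := by simpa using hdiff.neg
  have h1 := hx hd
  have hgrad : gradient (fun y => -c y) x = -gradient c x := by
    unfold gradient
    rw [fderiv_fun_neg, map_neg]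
  rw [hgrad, norm_neg, neg_sq]
  exact h1

lemma cInf_eq_neg_cSup_neg (c : En n → ℝ) (η : ℝ) (x : En n) :
    cInf c η x = -(cSup (fun y => -c y) η x) := by
  rw [cInf, cSup, Real.sInf_def]
  congr 1
  congr 1
  ext a
  simp only [Set.mem_neg, Set.mem_image, Set.mem_setOf_eq]
  constructor
  · rintro ⟨z, hz, hz2⟩
    exact ⟨z, hz, by linarith⟩
  · rintro ⟨z, hz, hz2⟩
    exact ⟨z, hz, by linarith⟩

end Prop31Aux

end AuxProofs

/-- Proposition 3.1(i): the perturbed forcing terms `c^η(x) = sup_{|z|≤η} c(x+z)` and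
`c_η(x) = inf_{|z|≤η} c(x+z)` are again `ℤ^n`-periodic, Lipschitz continuous (with the
same constant) and satisfy the coercivity condition with the same `δ`. -/
theorem perturbed_forcing_inherits_coercivity
    (n : ℕ) (hn : 2 ≤ n)
    (c : En n → ℝ) (Lc : NNReal) (hcLip : LipschitzWith Lc c) (hcPer : ZPeriodic c)
    (δ : ℝ) (hδ : 0 < δ) (hcoer : Coercive c δ)
    (η : ℝ) (hη : 0 ≤ η) :
    (ZPeriodic (cSup c η) ∧ LipschitzWith Lc (cSup c η) ∧ Coercive (cSup c η) δ) ∧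
      (ZPeriodic (cInf c η) ∧ LipschitzWith Lc (cInf c η) ∧ Coercive (cInf c η) δ) := by
  classical
  open Prop31Aux in
  have hNegLip : LipschitzWith Lc (fun y => -c y) := hcLip.neg
  have hNegCoer : Coercive (fun y => -c y) δ := coercive_neg hcoer
  have hInfEq : cInf c η = fun x => -(cSup (fun y => -c y) η x) :=
    funext fun x => cInf_eq_neg_cSup_neg c η x
  refine ⟨⟨cSup_periodic hcPer, cSup_lipschitz hcLip hη,
      coercive_cSup hn hcLip hδ hcoer hη⟩,
    ?_, cInf_lipschitz hcLip hη, ?_⟩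
  · -- periodicity of cInf
    exact cInf_periodic hcPer
  · -- coercivity of cInf
    have h1 : Coercive (cSup (fun y => -c y) η) δ :=
      coercive_cSup hn hNegLip hδ hNegCoer hη
    have h2 : Coercive (fun x => -(cSup (fun y => -c y) η x)) δ := coercive_neg h1
    rw [hInfEq]
    exact h2
end

section
/- Hessian ordering from the Crandall–Ishii matrix inequality. Let n ≥ 1, δ > 0, let q ∈ ℝ^n with |q| = 1, set B = δ(I_n + 2 q qᵀ) and A = [[B, −B],[−B, B]] ∈ S^{2n}. Suppose X, Y ∈ S^n satisfy −9δ I_{2n} ≤ [[X, 0],[0, −Y]] ≤ A + (1/(3δ)) A² in the Loewner order. Then −9δ I_n ≤ X ≤ Y ≤ 9δ I_n. -/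
open Filter Topology Set MeasureTheory

open Matrix

/-- Hessian ordering from the Crandall–Ishii matrix inequality: if
`-9δ I_{2n} ≤ [[X,0],[0,-Y]] ≤ A + (1/(3δ))A²` with `A = [[B,-B],[-B,B]]`,
`B = δ(I_n + 2qqᵀ)` and `|q| = 1`, then `-9δ I_n ≤ X ≤ Y ≤ 9δ I_n`. -/
theorem hessian_ordering_from_crandall_ishii
    (n : ℕ) (hn : 1 ≤ n) (δ : ℝ) (hδ : 0 < δ) (q : En n) (hq : ‖q‖ = 1)
    (B : Mat n) (hB : B = δ • ((1 : Mat n) + (2:ℝ) • outer q))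
    (A : Matrix (Fin n ⊕ Fin n) (Fin n ⊕ Fin n) ℝ)
    (hA : A = Matrix.fromBlocks B (-B) (-B) B)
    (X Y : Mat n) (hX : X.IsSymm) (hY : Y.IsSymm)
    (h1 : MLE (-((9 * δ) • (1 : Matrix (Fin n ⊕ Fin n) (Fin n ⊕ Fin n) ℝ)))
      (Matrix.fromBlocks X 0 0 (-Y)))
    (h2 : MLE (Matrix.fromBlocks X 0 0 (-Y)) (A + (1 / (3 * δ)) • (A * A))) :
    MLE (-((9 * δ) • (1 : Mat n))) X ∧ MLE X Y ∧ MLE Y ((9 * δ) • (1 : Mat n)) := by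
  obtain ⟨hH1, hq1⟩ := Matrix.posSemidef_iff_dotProduct_mulVec.mp h1
  obtain ⟨hH2, hq2⟩ := Matrix.posSemidef_iff_dotProduct_mulVec.mp h2
  have hAv : ∀ a : Fin n → ℝ, A *ᵥ (Sum.elim a a) = 0 := by
    intro a
    rw [hA, Matrix.fromBlocks_mulVec]
    simp [Matrix.neg_mulVec]
  have k1 : ∀ a : Fin n → ℝ, 0 ≤ a ⬝ᵥ (X *ᵥ a) + 9 * δ * (a ⬝ᵥ a) := by
    intro a
    have := hq1 (Sum.elim a 0)
    simpa [Matrix.sub_mulVec, Matrix.fromBlocks_mulVec, Matrix.neg_mulVec,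
      Matrix.smul_mulVec, sumElim_dotProduct_sumElim, Matrix.add_mulVec,
      Matrix.one_mulVec, dotProduct_add, dotProduct_smul, smul_eq_mul,
      mul_comm, mul_assoc] using this
  have k2 : ∀ b : Fin n → ℝ, b ⬝ᵥ (Y *ᵥ b) ≤ 9 * δ * (b ⬝ᵥ b) := by
    intro b
    have := hq1 (Sum.elim 0 b)
    simp only [Matrix.sub_mulVec, Matrix.fromBlocks_mulVec, Matrix.neg_mulVec,
      Matrix.smul_mulVec, sumElim_dotProduct_sumElim, Matrix.add_mulVec,
      Matrix.one_mulVec, dotProduct_add, dotProduct_smul, smul_eq_mul, Matrix.zero_mulVec,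
      Matrix.mulVec_zero, star_trivial, sub_neg_eq_add, add_zero, zero_add,
      dotProduct_zero, zero_dotProduct, dotProduct_neg, neg_neg, Sum.elim_comp_inl, Sum.elim_comp_inr] at this
    nlinarith [this]
  have k3 : ∀ a : Fin n → ℝ, a ⬝ᵥ (X *ᵥ a) ≤ a ⬝ᵥ (Y *ᵥ a) := by
    intro a
    have h0 : (A * A) *ᵥ (Sum.elim a a) = 0 := by
      rw [← Matrix.mulVec_mulVec, hAv, Matrix.mulVec_zero]
    have := hq2 (Sum.elim a a)
    simp only [Matrix.sub_mulVec, Matrix.add_mulVec, Matrix.smul_mulVec, h0, hAv,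
      Matrix.fromBlocks_mulVec, Matrix.neg_mulVec, sumElim_dotProduct_sumElim,
      Matrix.zero_mulVec, Matrix.mulVec_zero, star_trivial, smul_zero, add_zero, zero_add,
      zero_sub, dotProduct_neg, dotProduct_add, dotProduct_smul, smul_eq_mul,
      zero_dotProduct, dotProduct_zero, neg_neg,
      Sum.elim_comp_inl, Sum.elim_comp_inr] at this
    linarith
  refine ⟨Matrix.posSemidef_iff_dotProduct_mulVec.mpr ⟨?_, ?_⟩,
    Matrix.posSemidef_iff_dotProduct_mulVec.mpr ⟨?_, ?_⟩,
    Matrix.posSemidef_iff_dotProduct_mulVec.mpr ⟨?_, ?_⟩⟩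
  · rw [Matrix.IsHermitian, Matrix.conjTranspose_eq_transpose_of_trivial]
    simp [Matrix.transpose_sub, Matrix.transpose_smul, hX.eq]
  · intro a
    have := k1 a
    simp only [star_trivial, Matrix.sub_mulVec, Matrix.neg_mulVec, Matrix.smul_mulVec,
      Matrix.one_mulVec, dotProduct_sub, dotProduct_neg, dotProduct_smul, smul_eq_mul,
      sub_neg_eq_add, dotProduct_add, Matrix.add_mulVec]
    linarith
  · rw [Matrix.IsHermitian, Matrix.conjTranspose_eq_transpose_of_trivial]
    simp [Matrix.transpose_sub, hX.eq, hY.eq]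
  · intro a
    have := k3 a
    simp only [star_trivial, Matrix.sub_mulVec, dotProduct_sub]
    linarith
  · rw [Matrix.IsHermitian, Matrix.conjTranspose_eq_transpose_of_trivial]
    simp [Matrix.transpose_sub, Matrix.transpose_smul, hY.eq]
  · intro a
    have := k2 a
    simp only [star_trivial, Matrix.sub_mulVec, Matrix.smul_mulVec, Matrix.one_mulVec,
      dotProduct_sub, dotProduct_smul, smul_eq_mul]
    linarith
end

section
/- Localization of maximizers in the doubling-of-variables functional (estimates (2.30) in the proof of Theorem 1.4). Let n ≥ 1, T > 0, ε ∈ (0,1), and θ, β ∈ (0,1] with θ + β ≤ 1; let K ≥ 0, γ₁ ∈ (0,1], M > 0, C₀ > 0. Suppose u₁, u₂ : ℝ^n × [0,T] → ℝ satisfy |u_i(x,t) − u_i(y,s)| ≤ M(|x−y| + |t−s|) for i = 1,2, and v : ℝ^n × ℝ^n → ℝ satisfies |v(ξ,p) − v(ξ',p)| ≤ C₀ |p| |ξ−ξ'| and |v(ξ,p) − v(ξ,q)| ≤ C₀ ε^{−θ} |p−q| for all ξ, ξ', p, q ∈ ℝ^n. Define Φ(x,y,z,t,s) = u₁(x,t)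 − u₂(y,s) − ε v(x/ε, (z−y)/ε^β) − (|x−y|² + |t−s|²)/(2ε^β) − |x−z|²/(2ε^β) − K(t+s) − γ₁ √(1+|y|²). If Φ attains a global maximum over (ℝ^n)³ × [0,T]² at (x̂, ŷ, ẑ, t̂, ŝ), then there exists a constant C > 0 depending only on M, C₀, K such that |x̂ − ẑ| ≤ C ε^{1−θ} and |x̂ − ŷ| + |ŷ − ẑ| + |t̂ − ŝ| ≤ C ε^β. -/
open Filter Topology Set MeasureTheory

/-- The doubling-of-variables functional
`Φ(x,y,z,t,s) = u₁(x,t) − u₂(y,s) − ε v(x/ε, (z−y)/ε^β)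
  − (|x−y|² + |t−s|²)/(2ε^β) − |x−z|²/(2ε^β) − K(t+s) − γ₁⟨y⟩`. -/
noncomputable def dblPhi {n : ℕ} (ε β K γ₁ : ℝ) (u₁ u₂ : En n → ℝ → ℝ) (v : En n → En n → ℝ)
    (x y z : En n) (t s : ℝ) : ℝ :=
  u₁ x t - u₂ y s - ε * v (ε⁻¹ • x) ((ε ^ (-β)) • (z - y))
    - (‖x - y‖ ^ 2 + |t - s| ^ 2) / (2 * ε ^ β) - ‖x - z‖ ^ 2 / (2 * ε ^ β)
    - K * (t + s) - γ₁ * Real.sqrt (1 + ‖y‖ ^ 2)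

private lemma sqrt_one_add_sq_lip (c d : ℝ) :
    Real.sqrt (1 + c ^ 2) - Real.sqrt (1 + d ^ 2) ≤ |c - d| := by
  have h2 : Real.sqrt (1 + d ^ 2) ^ 2 = 1 + d ^ 2 := Real.sq_sqrt (by positivity)
  have hS2 : 0 ≤ Real.sqrt (1 + d ^ 2) := Real.sqrt_nonneg _
  have hd : |d| ≤ Real.sqrt (1 + d ^ 2) := by
    rw [← Real.sqrt_sq_eq_abs]
    exact Real.sqrt_le_sqrt (by nlinarith)
  have he : 0 ≤ |c - d| := abs_nonneg _
  have hc : |c| ≤ |d| + |c - d| := by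
    calc |c| = |d + (c - d)| := by ring_nf
    _ ≤ |d| + |c - d| := abs_add_le _ _
  have h1 : Real.sqrt (1 + c ^ 2) ≤ Real.sqrt (1 + d ^ 2) + |c - d| := by
    rw [show Real.sqrt (1 + d ^ 2) + |c - d|
        = Real.sqrt ((Real.sqrt (1 + d ^ 2) + |c - d|) ^ 2) from
        (Real.sqrt_sq (by positivity)).symm]
    apply Real.sqrt_le_sqrt
    nlinarith [sq_abs c, sq_abs d, abs_nonneg c, abs_nonneg d]
  linarith

/-- Localization of maximizers in the doubling-of-variables functional (estimates
(2.30)): at a global maximum point `(x̂,ŷ,ẑ,t̂,ŝ)` of `Φ` one has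
`|x̂−ẑ| ≤ Cε^{1−θ}` and `|x̂−ŷ| + |ŷ−ẑ| + |t̂−ŝ| ≤ Cε^β`, with `C` depending only
on `M`, `C₀`, `K`. -/
theorem localization_of_maximizers
    (M C₀ K : ℝ) (hM : 0 < M) (hC₀ : 0 < C₀) (hK : 0 ≤ K) :
    ∃ C : ℝ, 0 < C ∧
      ∀ (n : ℕ), 1 ≤ n →
      ∀ T ε θ β γ₁ : ℝ, 0 < T → 0 < ε → ε < 1 → 0 < θ → θ ≤ 1 → 0 < β → β ≤ 1 →
        θ + β ≤ 1 → 0 < γ₁ → γ₁ ≤ 1 →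
      ∀ u₁ u₂ : En n → ℝ → ℝ,
        (∀ (x y : En n) (t s : ℝ), t ∈ Icc (0:ℝ) T → s ∈ Icc (0:ℝ) T →
          |u₁ x t - u₁ y s| ≤ M * (‖x - y‖ + |t - s|)) →
        (∀ (x y : En n) (t s : ℝ), t ∈ Icc (0:ℝ) T → s ∈ Icc (0:ℝ) T →
          |u₂ x t - u₂ y s| ≤ M * (‖x - y‖ + |t - s|)) →
      ∀ v : En n → En n → ℝ,
        (∀ (ξ ξ' p : En n), |v ξ p - v ξ' p| ≤ C₀ * ‖p‖ * ‖ξ - ξ'‖) →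
        (∀ (ξ p q : En n), |v ξ p - v ξ q| ≤ C₀ * ε ^ (-θ) * ‖p - q‖) →
      ∀ (xh yh zh : En n) (th sh : ℝ), th ∈ Icc (0:ℝ) T → sh ∈ Icc (0:ℝ) T →
        (∀ (x y z : En n) (t s : ℝ), t ∈ Icc (0:ℝ) T → s ∈ Icc (0:ℝ) T →
          dblPhi ε β K γ₁ u₁ u₂ v x y z t s ≤ dblPhi ε β K γ₁ u₁ u₂ v xh yh zh th sh) →
        ‖xh - zh‖ ≤ C * ε ^ (1 - θ) ∧
          ‖xh - yh‖ + ‖yh - zh‖ + |th - sh| ≤ C * ε ^ β := by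
  refine ⟨8 * (M + C₀ + K + 1) + 2 * C₀, by positivity, ?_⟩
  intro n hn T ε θ β γ₁ hT hε hε1 hθ hθ1 hβ hβ1 hθβ hγ hγ1
  intro u₁ u₂ hu₁ hu₂ v hv1 hv2 xh yh zh th sh hth hsh hmax
  have hE : (0:ℝ) < ε ^ (β:ℝ) := Real.rpow_pos_of_pos hε β
  have hEnb : (0:ℝ) < ε ^ (-β:ℝ) := Real.rpow_pos_of_pos hε _
  have hEt : (0:ℝ) < ε ^ (1 - θ:ℝ) := Real.rpow_pos_of_pos hε _
  have h0 : ε ^ (-β:ℝ) * ε ^ (β:ℝ) = 1 := by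
    rw [← Real.rpow_add hε]; norm_num
  have h1' : ε * ε ^ (-θ:ℝ) = ε ^ (1 - θ:ℝ) := by
    rw [show (1:ℝ) - θ = 1 + -θ by ring, Real.rpow_add hε, Real.rpow_one]
  have h2' : ε ^ (1 - θ - β:ℝ) = ε * (ε ^ (-θ:ℝ) * ε ^ (-β:ℝ)) := by
    rw [show (1:ℝ) - θ - β = 1 + (-θ + -β) by ring, Real.rpow_add hε,
      Real.rpow_add hε, Real.rpow_one]
  have h5 : ε ^ (1 - θ - β:ℝ) ≤ 1 :=
    Real.rpow_le_one hε.le hε1.le (by linarith)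
  have hle : ε ^ (1 - θ:ℝ) ≤ ε ^ (β:ℝ) :=
    Real.rpow_le_rpow_of_exponent_ge hε hε1.le (by linarith)
  set d := ‖xh - zh‖ with hdd
  set a := ‖xh - yh‖ with haa
  set b := |th - sh| with hbb
  have hd0 : 0 ≤ d := hdd ▸ norm_nonneg _
  have ha0 : 0 ≤ a := haa ▸ norm_nonneg _
  have hb0 : 0 ≤ b := hbb ▸ abs_nonneg _
  -- the three corrector values
  set v1 := v (ε⁻¹ • xh) ((ε ^ (-β:ℝ)) • (xh - yh)) with hv1e
  set v2 := v (ε⁻¹ • xh) ((ε ^ (-β:ℝ)) • (zh - yh)) with hv2e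
  set v3 := v (ε⁻¹ • xh) ((ε ^ (-β:ℝ)) • (zh - xh)) with hv3e
  have hvle : v1 - v2 ≤ C₀ * ε ^ (-θ:ℝ) * (ε ^ (-β:ℝ) * d) := by
    have hvd := hv2 (ε⁻¹ • xh) ((ε ^ (-β:ℝ)) • (xh - yh)) ((ε ^ (-β:ℝ)) • (zh - yh))
    have hPnorm : ‖(ε ^ (-β:ℝ)) • (xh - yh) - (ε ^ (-β:ℝ)) • (zh - yh)‖
        = ε ^ (-β:ℝ) * d := by
      rw [show (ε ^ (-β:ℝ)) • (xh - yh) - (ε ^ (-β:ℝ)) • (zh - yh)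
          = (ε ^ (-β:ℝ)) • (xh - zh) by rw [← smul_sub]; congr 1; abel,
        norm_smul, Real.norm_eq_abs, abs_of_pos hEnb, hdd]
    rw [hPnorm] at hvd
    exact le_trans (le_abs_self _) hvd
  have hvle3 : v3 - v2 ≤ C₀ * ε ^ (-θ:ℝ) * (ε ^ (-β:ℝ) * a) := by
    have hvd := hv2 (ε⁻¹ • xh) ((ε ^ (-β:ℝ)) • (zh - xh)) ((ε ^ (-β:ℝ)) • (zh - yh))
    have hQnorm : ‖(ε ^ (-β:ℝ)) • (zh - xh) - (ε ^ (-β:ℝ)) • (zh - yh)‖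
        = ε ^ (-β:ℝ) * a := by
      rw [show (ε ^ (-β:ℝ)) • (zh - xh) - (ε ^ (-β:ℝ)) • (zh - yh)
          = (ε ^ (-β:ℝ)) • (yh - xh) by rw [← smul_sub]; congr 1; abel,
        norm_smul, Real.norm_eq_abs, abs_of_pos hEnb, norm_sub_rev, haa]
    rw [hQnorm] at hvd
    exact le_trans (le_abs_self _) hvd
  -- the sqrt and u₂ values
  set S1 := Real.sqrt (1 + ‖xh‖ ^ 2) with hS1e
  set S2 := Real.sqrt (1 + ‖yh‖ ^ 2) with hS2e
  have hsq : γ₁ * (S1 - S2) ≤ a := by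
    have hs := sqrt_one_add_sq_lip ‖xh‖ ‖yh‖
    have hn : |‖xh‖ - ‖yh‖| ≤ a := haa ▸ abs_norm_sub_norm_le xh yh
    rw [← hS1e, ← hS2e] at hs
    nlinarith [hs, hn]
  set w1 := u₂ xh th with hw1e
  set w2 := u₂ yh sh with hw2e
  have hw : w1 - w2 ≤ M * (a + b) := by
    have := le_trans (le_abs_self _) (hu₂ xh yh th sh hth hsh)
    rw [← haa, ← hbb, ← hw1e, ← hw2e] at this
    exact this
  set u := u₁ xh th with hue
  -- consequences of maximality
  have H1 := hmax xh yh xh th sh hth hsh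
  have H2 := hmax xh xh zh th th hth hth
  simp only [dblPhi, sub_self, norm_zero, abs_zero, ← hdd, ← haa, ← hbb, ← hv1e,
    ← hv2e, ← hv3e, ← hS1e, ← hS2e, ← hw1e, ← hw2e, ← hue] at H1 H2
  norm_num at H1 H2
  clear_value d a b v1 v2 v3 S1 S2 w1 w2 u
  set E := ε ^ (β:ℝ) with hEe
  set B := ε ^ (-β:ℝ) with hBe
  set Θ := ε ^ (-θ:ℝ) with hΘe
  set P := ε ^ (1 - θ:ℝ) with hPe
  set R := ε ^ (1 - θ - β:ℝ) with hRe
  clear_value E B Θ P R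
  -- Step 1 : d ≤ 2 C₀ P
  have hvle' := mul_le_mul_of_nonneg_left hvle hε.le
  have key1 : d ^ 2 / (2 * E) ≤ ε * (C₀ * Θ * (B * d)) := by linarith
  -- Step 2 setup
  have h3' := mul_le_mul_of_nonneg_left hvle3 hε.le
  have h4 : ε * (C₀ * Θ * (B * a)) = C₀ * R * a := by
    linear_combination (-(C₀ * a)) * h2'
  have h6 : C₀ * R * a ≤ C₀ * a := by
    have := mul_le_mul_of_nonneg_right (mul_le_mul_of_nonneg_left h5 hC₀.le) ha0
    linarith [this]
  have hb2 : ε * (v3 - v2) ≤ C₀ * a := by rw [h4] at h3'; linarith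
  have hb3 : K * (th - sh) ≤ K * b := by
    have := mul_le_mul_of_nonneg_left (le_abs_self (th - sh)) hK
    rw [← hbb] at this; exact this
  have key2 : (a ^ 2 + b ^ 2) / (2 * E) ≤ (M + C₀ + K + 1) * (a + b) := by
    linarith [mul_nonneg hC₀.le hb0, mul_nonneg hK ha0]
  have hyz : ‖yh - zh‖ ≤ a + d := by
    calc ‖yh - zh‖ = ‖(yh - xh) + (xh - zh)‖ := by congr 1; abel
    _ ≤ ‖yh - xh‖ + ‖xh - zh‖ := norm_add_le _ _
    _ = a + d := by rw [norm_sub_rev, ← haa, ← hdd]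
  -- discard heavy hypotheses before nonlinear arithmetic
  clear hmax hv1 hv2 hu₁ hu₂ hv1e hv2e hv3e hS1e hS2e hw1e hw2e hue H1 H2
  clear hvle hvle3 hvle' h3' hsq hw h4 h6 hb2 hb3 hdd haa hbb
  clear hEe hBe hΘe hPe hRe
  clear u₁ u₂ v v1 v2 v3 S1 S2 w1 w2 u
  -- Step 1 concluded
  have hd2 : d ^ 2 ≤ 2 * C₀ * P * d := by
    rw [div_le_iff₀ (by linarith : (0:ℝ) < 2 * E)] at key1
    have hident : ε * (C₀ * Θ * (B * d)) * (2 * E) = 2 * C₀ * P * d := by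
      linear_combination (2 * C₀ * d * ε * Θ) * h0 + (2 * C₀ * d) * h1'
    rw [hident] at key1
    exact key1
  have hdC : d ≤ 2 * C₀ * P := by
    rcases hd0.eq_or_lt with h | h
    · rw [← h]; exact mul_nonneg (by linarith) hEt.le
    · rw [pow_two] at hd2
      exact le_of_mul_le_mul_right hd2 h
  -- Step 2 concluded
  have hab2 : a ^ 2 + b ^ 2 ≤ 2 * E * ((M + C₀ + K + 1) * (a + b)) := by
    rw [div_le_iff₀ (by linarith : (0:ℝ) < 2 * E)] at key2
    linarith
  have habC : a + b ≤ 4 * (M + C₀ + K + 1) * E := by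
    rcases (by linarith : (0:ℝ) ≤ a + b).eq_or_lt with h | h
    · rw [← h]; exact mul_nonneg (by linarith) hE.le
    · have h8 : (a + b) * (a + b) ≤ (4 * (M + C₀ + K + 1) * E) * (a + b) := by
        linarith [sq_nonneg (a - b)]
      exact le_of_mul_le_mul_right h8 h
  -- conclusion
  constructor
  · have h7 : (0:ℝ) ≤ 8 * (M + C₀ + K + 1) * P := mul_nonneg (by linarith) hEt.le
    linarith [hdC, h7]
  · have hdE : d ≤ 2 * C₀ * E := by
      linarith [mul_le_mul_of_nonneg_left hle (by linarith : (0:ℝ) ≤ 2 * C₀)]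
    linarith [habC, hyz, hdE]
end
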